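/- Let g be a 2n-dimensional real nilpotent Lie algebra with n ≥ 3 and a complex structure J. If g_k ∩ J(g_k) = {0} and dim g_{k+1} = 1 + dim g_k for some k ≥ 1, then g_{k+1} ∩ J(g_{k+1}) = {0}. -/
import Mathlib


/-- The ascending central series of a Lie algebra:
`acs g 0 = 0`, `acs g (k+1) = {X | [X,g] ⊆ acs g k}`. -/
def acs (g : Type*) [LieRing g] [LieAlgebra ℝ g] : ℕ → Submodule ℝ g
  | 0 => ⊥
  | k + 1 =>
    { carrier := {X : g | ∀ Y : g, ⁅X, Y⁆ ∈ acs g k}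
      zero_mem' := by intro Y; simp
      add_mem' := by
        intro a b ha hb Y
        rw [add_lie]; exact (acs g k).add_mem (ha Y) (hb Y)
      smul_mem' := by
        intro c x hx Y
        rw [smul_lie]; exact (acs g k).smul_mem c (hx Y) }

lemma mem_acs_succ {g : Type*} [LieRing g] [LieAlgebra ℝ g] {k : ℕ} {X : g} :
    X ∈ acs g (k + 1) ↔ ∀ Y : g, ⁅X, Y⁆ ∈ acs g k := Iff.rfl

lemma acs_le_succ (g : Type*) [LieRing g] [LieAlgebra ℝ g] :
    ∀ k : ℕ, acs g k ≤ acs g (k + 1)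
  | 0 => bot_le
  | (k + 1) => fun X hX => by
      rw [mem_acs_succ] at hX ⊢
      exact fun Y => acs_le_succ g k (hX Y)

/-- if `n ≥ 3`, `g_k ∩ J(g_k) = 0` and
`dim g_{k+1} = 1 + dim g_k` for some `k ≥ 1`, then `g_{k+1} ∩ J(g_{k+1}) = 0`. -/
theorem acs_succ_inf_J_eq_bot (g : Type*) [LieRing g] [LieAlgebra ℝ g]
    [FiniteDimensional ℝ g] (n : ℕ) (hn : 3 ≤ n)
    (hdim : Module.finrank ℝ g = 2 * n)
    (hnil : ∃ s : ℕ, acs g s = ⊤)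
    (J : g →ₗ[ℝ] g) (hJ2 : ∀ X : g, J (J X) = -X)
    (hN : ∀ X Y : g, ⁅X, Y⁆ + J ⁅J X, Y⁆ + J ⁅X, J Y⁆ - ⁅J X, J Y⁆ = 0)
    (k : ℕ) (hk : 1 ≤ k)
    (h : acs g k ⊓ (acs g k).map J = ⊥)
    (hd : Module.finrank ℝ (acs g (k + 1)) = 1 + Module.finrank ℝ (acs g k)) :
    acs g (k + 1) ⊓ (acs g (k + 1)).map J = ⊥ := by
  obtain ⟨m, rfl⟩ : ∃ m, k = m + 1 := ⟨k - 1, (Nat.succ_pred_eq_of_pos hk).symm⟩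
  -- J is injective (in the relevant sense)
  have hJinj : ∀ X : g, J X = 0 → X = 0 := by
    intro X hX
    have := hJ2 X
    rw [hX, map_zero] at this
    exact neg_eq_zero.mp this.symm
  -- Key: if W ∈ g_k and J W ∈ g_{k+1}, then W = 0.
  have key : ∀ W : g, W ∈ acs g (m + 1) → J W ∈ acs g (m + 2) → W = 0 := by
    intro W hW hJW
    have hWm : ∀ Y : g, ⁅W, Y⁆ ∈ acs g m := mem_acs_succ.mp hW
    have hJWK : ∀ Y : g, ⁅J W, Y⁆ ∈ acs g (m + 1) := mem_acs_succ.mp hJW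
    have hJWinK : J W ∈ acs g (m + 1) := by
      rw [mem_acs_succ]
      intro Y
      have hSK : ⁅J W, Y⁆ + ⁅W, J Y⁆ ∈ acs g (m + 1) :=
        (acs g (m + 1)).add_mem (hJWK Y) (acs_le_succ g m (hWm (J Y)))
      have hJS : J (⁅J W, Y⁆ + ⁅W, J Y⁆) = ⁅J W, J Y⁆ - ⁅W, Y⁆ := by
        have hnwy := hN W Y
        rw [map_add, eq_sub_iff_add_eq]
        rw [sub_eq_zero] at hnwy
        rw [← hnwy]; abel
      have hJSK : J (⁅J W, Y⁆ + ⁅W, J Y⁆) ∈ acs g (m + 1) := by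
        rw [hJS]
        exact (acs g (m + 1)).sub_mem (hJWK (J Y)) (acs_le_succ g m (hWm Y))
      have hmem : J (⁅J W, Y⁆ + ⁅W, J Y⁆) ∈
          acs g (m + 1) ⊓ (acs g (m + 1)).map J :=
        ⟨hJSK, ⟨_, hSK, rfl⟩⟩
      rw [h] at hmem
      have hS0 : ⁅J W, Y⁆ + ⁅W, J Y⁆ = 0 :=
        hJinj _ ((Submodule.mem_bot ℝ).mp hmem)
      have : ⁅J W, Y⁆ = -⁅W, J Y⁆ := eq_neg_of_add_eq_zero_left hS0
      rw [this]
      exact (acs g m).neg_mem (hWm (J Y))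
    have hmem : J W ∈ acs g (m + 1) ⊓ (acs g (m + 1)).map J :=
      ⟨hJWinK, ⟨W, hW, rfl⟩⟩
    rw [h] at hmem
    exact hJinj W ((Submodule.mem_bot ℝ).mp hmem)
  -- The submodule V = g_{k+1} ∩ J⁻¹(g_{k+1})
  set V : Submodule ℝ g := acs g (m + 2) ⊓ (acs g (m + 2)).comap J with hVdef
  have hVmem : ∀ Z : g, Z ∈ V ↔ Z ∈ acs g (m + 2) ∧ J Z ∈ acs g (m + 2) := by
    intro Z; rfl
  have hVJ : ∀ Z ∈ V, J Z ∈ V := by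
    intro Z hZ
    rw [hVmem] at hZ ⊢
    refine ⟨hZ.2, ?_⟩
    rw [hJ2]
    exact (acs g (m + 2)).neg_mem hZ.1
  -- V ∩ g_k = ⊥
  have hVK : V ⊓ acs g (m + 1) = ⊥ := by
    rw [eq_bot_iff]
    intro W hW
    rw [Submodule.mem_inf] at hW
    obtain ⟨hWV, hWK⟩ := hW
    rw [hVmem] at hWV
    exact (Submodule.mem_bot ℝ).mpr (key W hWK hWV.2)
  -- finrank V ≤ 1
  have hsup : V ⊔ acs g (m + 1) ≤ acs g (m + 2) :=
    sup_le inf_le_left (acs_le_succ g (m + 1))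
  have hr := Submodule.finrank_sup_add_finrank_inf_eq V (acs g (m + 1))
  rw [hVK, finrank_bot] at hr
  have hle : Module.finrank ℝ ↥(V ⊔ acs g (m + 1)) ≤ Module.finrank ℝ (acs g (m + 2)) :=
    Submodule.finrank_mono hsup
  have hd2 : Module.finrank ℝ (acs g (m + 2)) = 1 + Module.finrank ℝ (acs g (m + 1)) := hd
  have hVr : Module.finrank ℝ V ≤ 1 := by omega
  -- V = ⊥
  have hV0 : V = ⊥ := by
    by_contra hne
    obtain ⟨Z, hZV, hZ0⟩ := Submodule.exists_mem_ne_zero_of_ne_bot hne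
    have hVpos : 0 < Module.finrank ℝ V :=
      Module.finrank_pos_iff.mpr (Submodule.nontrivial_iff_ne_bot.mpr hne)
    have h1 : Module.finrank ℝ V = 1 := le_antisymm hVr hVpos
    have hZne : (⟨Z, hZV⟩ : V) ≠ 0 := by
      simp only [ne_eq, Submodule.mk_eq_zero]; exact hZ0
    have hspan := (finrank_eq_one_iff_of_nonzero (⟨Z, hZV⟩ : V) hZne).mp h1
    have hJZmem : (⟨J Z, hVJ Z hZV⟩ : V) ∈ Submodule.span ℝ {(⟨Z, hZV⟩ : V)} := by
      rw [hspan]; trivial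
    obtain ⟨c, hc⟩ := Submodule.mem_span_singleton.mp hJZmem
    have hc' : c • Z = J Z := congrArg Subtype.val hc
    have hJJ : (c * c) • Z = -Z := by
      rw [← smul_smul, hc', ← map_smul, hc', hJ2]
    have hzero : (c * c + 1) • Z = 0 := by
      rw [add_smul, one_smul, hJJ]; abel
    have hcc : c * c + 1 ≠ 0 := by nlinarith [mul_self_nonneg c]
    exact hZ0 ((smul_eq_zero.mp hzero).resolve_left hcc)
  -- conclude
  rw [eq_bot_iff]
  rintro Z ⟨hZ1, W, hWK', rfl⟩
  have hJWV : J W ∈ V := by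
    rw [hVmem]
    refine ⟨hZ1, ?_⟩
    rw [hJ2]
    exact (acs g (m + 2)).neg_mem hWK'
  rw [hV0] at hJWV
  exact hJWV
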